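/- For every subset A of ℤ, the upper Banach density of A defined via Følner sequences equals the interval-based upper Banach density; that is, sup_F d̄_F(A), where the supremum ranges over all Følner sequences F in the additive group ℤ, equals limsup_{n→∞} sup_{m∈ℤ} |A ∩ [m+1, m+n]|/n. -/

import Mathlib

open Filter
open scoped Classical

/-- `F` is a Følner sequence in the additive group `ℤ`. -/
def IsFolnerZ (F : ℕ → Finset ℤ) : Prop :=
  (∀ n, (F n).Nonempty) ∧
    Tendsto (fun n => (F n).card) atTop atTop ∧
    ∀ g : ℤ, Tendsto
      (fun n => (((F n) ∩ (F n).image (g + ·)).card : ℝ) / ((F n).card : ℝ))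
      atTop (nhds 1)

/-- The upper density of `A ⊆ ℤ` with respect to the sequence `F`. -/
noncomputable def upperDensityZ (F : ℕ → Finset ℤ) (A : Set ℤ) : ℝ :=
  limsup (fun n => (((F n).filter (· ∈ A)).card : ℝ) / ((F n).card : ℝ)) atTop

/-- The number of elements of `A` in the interval `[m+1, m+n]`. -/
noncomputable def cntA (A : Set ℤ) (n : ℕ) (m : ℤ) : ℕ :=
  ((Finset.Icc (m + 1) (m + (n : ℤ))).filter (· ∈ A)).card

/-- The maximal density of `A` on intervals of length `n`. -/
noncomputable def BfunA (A : Set ℤ) (n : ℕ) : ℝ :=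
  ⨆ m : ℤ, ((cntA A n m : ℝ) / (n : ℝ))

lemma card_intIcc (a : ℤ) (N : ℕ) : (Finset.Icc (a + 1) (a + (N : ℤ))).card = N := by
  rw [Int.card_Icc]; omega

lemma cntA_le (A : Set ℤ) (n : ℕ) (m : ℤ) : cntA A n m ≤ n := by
  have h := Finset.card_filter_le (Finset.Icc (m + 1) (m + (n : ℤ))) (· ∈ A)
  have h2 := card_intIcc m n
  unfold cntA
  omega

lemma cntA_term_nonneg (A : Set ℤ) (n : ℕ) (m : ℤ) : (0 : ℝ) ≤ (cntA A n m : ℝ) / (n : ℝ) := by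
  positivity

lemma cntA_term_le_one (A : Set ℤ) (n : ℕ) (m : ℤ) : (cntA A n m : ℝ) / (n : ℝ) ≤ 1 := by
  rcases Nat.eq_zero_or_pos n with h | h
  · simp [h]
  · rw [div_le_one (by exact_mod_cast h)]
    exact_mod_cast cntA_le A n m

lemma bddAbove_cntA (A : Set ℤ) (n : ℕ) :
    BddAbove (Set.range fun m : ℤ => (cntA A n m : ℝ) / (n : ℝ)) := by
  refine ⟨1, ?_⟩
  rintro x ⟨m, rfl⟩
  exact cntA_term_le_one A n m

lemma BfunA_nonneg (A : Set ℤ) (n : ℕ) : 0 ≤ BfunA A n :=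
  le_trans (cntA_term_nonneg A n 0) (le_ciSup (bddAbove_cntA A n) 0)

lemma BfunA_le_one (A : Set ℤ) (n : ℕ) : BfunA A n ≤ 1 :=
  ciSup_le fun m => cntA_term_le_one A n m

lemma exists_opt (A : Set ℤ) (n : ℕ) (hn : 1 ≤ n) :
    ∃ m0 : ℤ, (∀ m, cntA A n m ≤ cntA A n m0) ∧ BfunA A n = (cntA A n m0 : ℝ) / (n : ℝ) := by
  have hbdd : BddAbove (Set.range (cntA A n)) := by
    refine ⟨n, ?_⟩
    rintro x ⟨m, rfl⟩
    exact cntA_le A n m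
  obtain ⟨m0, hm0⟩ := Nat.sSup_mem ⟨cntA A n 0, Set.mem_range_self 0⟩ hbdd
  refine ⟨m0, fun m => ?_, ?_⟩
  · rw [hm0]
    exact le_csSup hbdd (Set.mem_range_self m)
  · refine le_antisymm (ciSup_le fun m => ?_) ?_
    · have hle : cntA A n m ≤ cntA A n m0 := by
        rw [hm0]; exact le_csSup hbdd (Set.mem_range_self m)
      have hle' : (cntA A n m : ℝ) ≤ (cntA A n m0 : ℝ) := by exact_mod_cast hle
      gcongr
    · exact le_ciSup (bddAbove_cntA A n) m0

lemma folner_intervals (f : ℕ → ℤ) :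
    IsFolnerZ (fun n => Finset.Icc (f n + 1) (f n + ((max n 1 : ℕ) : ℤ))) := by
  have hmax : ∀ n : ℕ, 1 ≤ max n 1 := fun n => le_max_right n 1
  have hcard : ∀ n : ℕ, (Finset.Icc (f n + 1) (f n + ((max n 1 : ℕ) : ℤ))).card = max n 1 :=
    fun n => card_intIcc (f n) (max n 1)
  refine ⟨?_, ?_, ?_⟩
  · intro n
    refine Finset.nonempty_Icc.mpr ?_
    have := hmax n
    omega
  · have h1 : Tendsto (fun n : ℕ => max n 1) atTop atTop :=
      tendsto_atTop_mono (fun n => le_max_left n 1) tendsto_id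
    simpa only [hcard] using h1
  · intro g
    have htend : Tendsto (fun n : ℕ => ((max n 1 : ℕ) : ℝ)) atTop atTop := by
      exact tendsto_natCast_atTop_atTop.comp (tendsto_atTop_mono (fun n => le_max_left n 1) tendsto_id)
    have hdiv : Tendsto (fun n : ℕ => (g.natAbs : ℝ) / ((max n 1 : ℕ) : ℝ)) atTop (nhds 0) :=
      Tendsto.div_atTop tendsto_const_nhds htend
    have hlim : Tendsto (fun n : ℕ => 1 - (g.natAbs : ℝ) / ((max n 1 : ℕ) : ℝ)) atTop (nhds 1) := by
      have h := (tendsto_const_nhds (x := (1 : ℝ)) (f := atTop (α := ℕ))).sub hdiv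
      simpa using h
    refine Tendsto.congr' ?_ hlim
    filter_upwards [eventually_ge_atTop g.natAbs] with n hn
    set N : ℕ := max n 1 with hN
    have hNg : g.natAbs ≤ N := le_trans hn (le_max_left n 1)
    have himg : (Finset.Icc (f n + 1) (f n + (N : ℤ))).image (g + ·)
        = Finset.Icc (g + (f n + 1)) (g + (f n + (N : ℤ))) := Finset.image_add_left_Icc _ _ _
    have hint : Finset.Icc (f n + 1) (f n + (N : ℤ)) ∩ Finset.Icc (g + (f n + 1)) (g + (f n + (N : ℤ)))
        = Finset.Icc (max (f n + 1) (g + (f n + 1))) (min (f n + (N : ℤ)) (g + (f n + (N : ℤ)))) := by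
      ext x
      simp only [Finset.mem_inter, Finset.mem_Icc]
      omega
    have hcard2 : (Finset.Icc (f n + 1) (f n + (N : ℤ)) ∩
        (Finset.Icc (f n + 1) (f n + (N : ℤ))).image (g + ·)).card = N - g.natAbs := by
      rw [himg, hint, Int.card_Icc]
      omega
    have hNpos : (0 : ℝ) < (N : ℝ) := by
      have := hmax n
      exact_mod_cast lt_of_lt_of_le Nat.zero_lt_one this
    rw [hcard2, hcard n]
    rw [Nat.cast_sub hNg, sub_div, div_self hNpos.ne']
  -- done

lemma counting (A : Set ℤ) (n : ℕ) (hn : 1 ≤ n) (F : Finset ℤ) (k : ℕ)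
    (hk : ∀ m : ℤ, cntA A n m ≤ k) :
    n * (F.filter (· ∈ A)).card ≤
      F.card * k + n * (F.filter (fun x => ¬ Finset.Icc (x - (n : ℤ)) (x + (n : ℤ)) ⊆ F)).card := by
  classical
  set S := F.filter (· ∈ A) with hS
  set Bd := F.filter (fun x => ¬ Finset.Icc (x - (n : ℤ)) (x + (n : ℤ)) ⊆ F) with hBd
  set M : Finset ℤ := F.biUnion (fun x => Finset.Icc (x - (n : ℤ)) (x - 1)) with hM
  have hsub : ∀ x ∈ F, Finset.Icc (x - (n : ℤ)) (x - 1) ⊆ M := by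
    intro x hx
    exact Finset.subset_biUnion_of_mem (fun y => Finset.Icc (y - (n : ℤ)) (y - 1)) hx
  have key : ∀ T : Finset ℤ, T ⊆ F →
      ∑ m ∈ M, (T.filter (fun x => x ∈ Finset.Icc (m + 1) (m + (n : ℤ)))).card = n * T.card := by
    intro T hT
    have step1 : ∀ m ∈ M, (T.filter (fun x => x ∈ Finset.Icc (m + 1) (m + (n : ℤ)))).card
        = ∑ x ∈ T, if x ∈ Finset.Icc (m + 1) (m + (n : ℤ)) then 1 else 0 := by
      intro m _
      rw [Finset.card_filter]
    rw [Finset.sum_congr rfl step1, Finset.sum_comm]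
    have step2 : ∀ x ∈ T, ∑ m ∈ M, (if x ∈ Finset.Icc (m + 1) (m + (n : ℤ)) then 1 else 0) = n := by
      intro x hx
      have hfil : M.filter (fun m => x ∈ Finset.Icc (m + 1) (m + (n : ℤ)))
          = Finset.Icc (x - (n : ℤ)) (x - 1) := by
        ext m
        simp only [Finset.mem_filter, Finset.mem_Icc]
        constructor
        · rintro ⟨-, h1, h2⟩
          omega
        · intro h
          refine ⟨hsub x (hT hx) (Finset.mem_Icc.mpr (by omega)), by omega⟩
      rw [← Finset.card_filter, hfil, Int.card_Icc]
      omega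
    rw [Finset.sum_congr rfl step2, Finset.sum_const, smul_eq_mul, mul_comm]
  have perm : ∀ m ∈ M, (S.filter (fun x => x ∈ Finset.Icc (m + 1) (m + (n : ℤ)))).card ≤
      (if Finset.Icc (m + 1) (m + (n : ℤ)) ⊆ F then k else 0)
        + (Bd.filter (fun x => x ∈ Finset.Icc (m + 1) (m + (n : ℤ)))).card := by
    intro m _
    by_cases hP : Finset.Icc (m + 1) (m + (n : ℤ)) ⊆ F
    · rw [if_pos hP]
      have h1 : S.filter (fun x => x ∈ Finset.Icc (m + 1) (m + (n : ℤ)))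
          ⊆ (Finset.Icc (m + 1) (m + (n : ℤ))).filter (· ∈ A) := by
        intro x hx
        simp only [hS, Finset.mem_filter] at hx ⊢
        exact ⟨hx.2, hx.1.2⟩
      calc (S.filter (fun x => x ∈ Finset.Icc (m + 1) (m + (n : ℤ)))).card
          ≤ cntA A n m := Finset.card_le_card h1
        _ ≤ k := hk m
        _ ≤ _ := Nat.le_add_right _ _
    · rw [if_neg hP, zero_add]
      refine Finset.card_le_card ?_
      intro x hx
      simp only [hS, hBd, Finset.mem_filter] at hx ⊢
      obtain ⟨⟨hxF, _⟩, hxI⟩ := hx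
      refine ⟨⟨hxF, ?_⟩, hxI⟩
      intro hsubF
      apply hP
      refine Finset.Icc_subset_Icc ?_ ?_ |>.trans hsubF
      · rw [Finset.mem_Icc] at hxI; omega
      · rw [Finset.mem_Icc] at hxI; omega
  have hgood : ∑ m ∈ M, (if Finset.Icc (m + 1) (m + (n : ℤ)) ⊆ F then k else 0) ≤ F.card * k := by
    rw [← Finset.sum_filter]
    rw [Finset.sum_const, smul_eq_mul]
    refine Nat.mul_le_mul_right k ?_
    refine Finset.card_le_card_of_injOn (fun m => m + 1) ?_ ?_
    · intro m hm
      simp only [Finset.mem_coe, Finset.mem_filter] at hm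
      refine hm.2 (Finset.mem_Icc.mpr ?_)
      show m + 1 ≤ m + 1 ∧ m + 1 ≤ m + (n : ℤ)
      omega
    · intro a _ b _ h
      have h' : a + 1 = b + 1 := h
      omega
  calc n * S.card
      = ∑ m ∈ M, (S.filter (fun x => x ∈ Finset.Icc (m + 1) (m + (n : ℤ)))).card :=
        (key S (Finset.filter_subset _ _)).symm
    _ ≤ ∑ m ∈ M, ((if Finset.Icc (m + 1) (m + (n : ℤ)) ⊆ F then k else 0)
          + (Bd.filter (fun x => x ∈ Finset.Icc (m + 1) (m + (n : ℤ)))).card) :=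
        Finset.sum_le_sum perm
    _ = (∑ m ∈ M, (if Finset.Icc (m + 1) (m + (n : ℤ)) ⊆ F then k else 0))
          + ∑ m ∈ M, (Bd.filter (fun x => x ∈ Finset.Icc (m + 1) (m + (n : ℤ)))).card :=
        Finset.sum_add_distrib
    _ ≤ F.card * k + n * Bd.card := by
        refine add_le_add hgood ?_
        rw [key Bd (Finset.filter_subset _ _)]

lemma boundary (F : Finset ℤ) (n : ℕ) :
    (F.filter (fun x => ¬ Finset.Icc (x - (n : ℤ)) (x + (n : ℤ)) ⊆ F)).card ≤
      ∑ g ∈ Finset.Icc (-(n : ℤ)) (n : ℤ), (F.card - (F ∩ F.image (g + ·)).card) := by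
  classical
  have hsub : F.filter (fun x => ¬ Finset.Icc (x - (n : ℤ)) (x + (n : ℤ)) ⊆ F)
      ⊆ (Finset.Icc (-(n : ℤ)) (n : ℤ)).biUnion (fun g => F \ F.image (g + ·)) := by
    intro x hx
    simp only [Finset.mem_filter] at hx
    obtain ⟨hxF, hbad⟩ := hx
    obtain ⟨y, hy, hyF⟩ := Finset.not_subset.mp hbad
    rw [Finset.mem_Icc] at hy
    refine Finset.mem_biUnion.mpr ⟨x - y, Finset.mem_Icc.mpr (by omega), Finset.mem_sdiff.mpr ⟨hxF, ?_⟩⟩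
    intro hmem
    obtain ⟨z, hz, hzx⟩ := Finset.mem_image.mp hmem
    have : z = y := by omega
    exact hyF (this ▸ hz)
  calc (F.filter (fun x => ¬ Finset.Icc (x - (n : ℤ)) (x + (n : ℤ)) ⊆ F)).card
      ≤ ((Finset.Icc (-(n : ℤ)) (n : ℤ)).biUnion (fun g => F \ F.image (g + ·))).card :=
        Finset.card_le_card hsub
    _ ≤ ∑ g ∈ Finset.Icc (-(n : ℤ)) (n : ℤ), (F \ F.image (g + ·)).card :=
        Finset.card_biUnion_le
    _ ≤ ∑ g ∈ Finset.Icc (-(n : ℤ)) (n : ℤ), (F.card - (F ∩ F.image (g + ·)).card) := by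
        refine Finset.sum_le_sum fun g _ => ?_
        have := Finset.card_inter_add_card_sdiff F (F.image (g + ·))
        omega

lemma upper_le (A : Set ℤ) (F : ℕ → Finset ℤ) (hF : IsFolnerZ F) :
    upperDensityZ F A ≤ limsup (BfunA A) atTop := by
  obtain ⟨hne, hcard, hfol⟩ := hF
  set u : ℕ → ℝ := fun j => (((F j).filter (· ∈ A)).card : ℝ) / ((F j).card : ℝ) with hu
  have hu0 : ∀ j, 0 ≤ u j := fun j => by positivity
  have hmain : ∀ n : ℕ, 1 ≤ n → upperDensityZ F A ≤ BfunA A n := by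
    intro n hn
    obtain ⟨m0, hmax, hBeq⟩ := exists_opt A n hn
    set k := cntA A n m0 with hk
    set w : ℕ → ℝ := fun j => BfunA A n + ∑ g ∈ Finset.Icc (-(n : ℤ)) (n : ℤ),
      (1 - (((F j ∩ (F j).image (g + ·)).card : ℝ) / ((F j).card : ℝ))) with hw
    have hle : ∀ j, u j ≤ w j := by
      intro j
      have hGpos : (0 : ℝ) < ((F j).card : ℝ) := by
        exact_mod_cast Finset.card_pos.mpr (hne j)
      have hnpos : (0 : ℝ) < (n : ℝ) := by exact_mod_cast hn
      set T : ℝ := ∑ g ∈ Finset.Icc (-(n : ℤ)) (n : ℤ),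
        (((F j).card : ℝ) - ((F j ∩ (F j).image (g + ·)).card : ℝ)) with hT
      have hnat : (n : ℝ) * (((F j).filter (· ∈ A)).card : ℝ) ≤
          ((F j).card : ℝ) * (k : ℝ) + (n : ℝ) * T := by
        have h1 := counting A n hn (F j) k hmax
        have h2 := boundary (F j) n
        have h3 : ((F j).filter (fun x => ¬ Finset.Icc (x - (n : ℤ)) (x + (n : ℤ)) ⊆ F j)).card ≤
            ∑ g ∈ Finset.Icc (-(n : ℤ)) (n : ℤ), ((F j).card - (F j ∩ (F j).image (g + ·)).card) := h2
        have hcast : ((∑ g ∈ Finset.Icc (-(n : ℤ)) (n : ℤ),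
            ((F j).card - (F j ∩ (F j).image (g + ·)).card) : ℕ) : ℝ) = T := by
          rw [Nat.cast_sum]
          refine Finset.sum_congr rfl fun g _ => ?_
          rw [Nat.cast_sub (Finset.card_le_card Finset.inter_subset_left)]
        have h4 : (n : ℝ) * (((F j).filter (· ∈ A)).card : ℝ) ≤
            ((F j).card : ℝ) * (k : ℝ) + (n : ℝ) *
              ((∑ g ∈ Finset.Icc (-(n : ℤ)) (n : ℤ),
                ((F j).card - (F j ∩ (F j).image (g + ·)).card) : ℕ) : ℝ) := by
          have := le_trans h1 (by
            have : (F j).card * k + n * ((F j).filter (fun x => ¬ Finset.Icc (x - (n : ℤ)) (x + (n : ℤ)) ⊆ F j)).card ≤ (F j).card * k + n * ∑ g ∈ Finset.Icc (-(n : ℤ)) (n : ℤ), ((F j).card - (F j ∩ (F j).image (g + ·)).card) := by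
              exact Nat.add_le_add_left (Nat.mul_le_mul_left n h3) _
            exact this)
          exact_mod_cast this
        rw [hcast] at h4
        exact h4
      have hsum : (∑ g ∈ Finset.Icc (-(n : ℤ)) (n : ℤ),
          (1 - (((F j ∩ (F j).image (g + ·)).card : ℝ) / ((F j).card : ℝ)))) * ((F j).card : ℝ) = T := by
        rw [Finset.sum_mul]
        refine Finset.sum_congr rfl fun g _ => ?_
        rw [sub_mul, one_mul, div_mul_cancel₀ _ hGpos.ne']
      have hstep : u j ≤ ((F j).card : ℝ) * (k : ℝ) / (n : ℝ) / ((F j).card : ℝ) + T / ((F j).card : ℝ) := by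
        rw [hu]
        have : (((F j).filter (· ∈ A)).card : ℝ) ≤ ((F j).card : ℝ) * (k : ℝ) / (n : ℝ) + T := by
          rw [div_add' _ _ _ hnpos.ne', le_div_iff₀ hnpos]
          linarith [hnat]
        calc (((F j).filter (· ∈ A)).card : ℝ) / ((F j).card : ℝ)
            ≤ (((F j).card : ℝ) * (k : ℝ) / (n : ℝ) + T) / ((F j).card : ℝ) := by
              gcongr
          _ = ((F j).card : ℝ) * (k : ℝ) / (n : ℝ) / ((F j).card : ℝ) + T / ((F j).card : ℝ) := by
              rw [add_div]
      rw [hw]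
      have e1 : ((F j).card : ℝ) * (k : ℝ) / (n : ℝ) / ((F j).card : ℝ) = (k : ℝ) / (n : ℝ) := by
        field_simp
      have e2 : T / ((F j).card : ℝ) = ∑ g ∈ Finset.Icc (-(n : ℤ)) (n : ℤ),
          (1 - (((F j ∩ (F j).image (g + ·)).card : ℝ) / ((F j).card : ℝ))) := by
        rw [← hsum, mul_div_assoc, div_self hGpos.ne', mul_one]
      rw [hBeq]
      calc u j ≤ ((F j).card : ℝ) * (k : ℝ) / (n : ℝ) / ((F j).card : ℝ) + T / ((F j).card : ℝ) := hstep
        _ = (k : ℝ) / (n : ℝ) + ∑ g ∈ Finset.Icc (-(n : ℤ)) (n : ℤ),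
            (1 - (((F j ∩ (F j).image (g + ·)).card : ℝ) / ((F j).card : ℝ))) := by rw [e1, e2]
    have hwlim : Tendsto w atTop (nhds (BfunA A n)) := by
      have hsumlim : Tendsto (fun j => ∑ g ∈ Finset.Icc (-(n : ℤ)) (n : ℤ),
          (1 - (((F j ∩ (F j).image (g + ·)).card : ℝ) / ((F j).card : ℝ)))) atTop (nhds 0) := by
        have h0 := tendsto_finset_sum (Finset.Icc (-(n : ℤ)) (n : ℤ))
          (fun g (_ : g ∈ Finset.Icc (-(n : ℤ)) (n : ℤ)) =>
            (tendsto_const_nhds (x := (1:ℝ))).sub (hfol g))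
        rw [show (∑ _g ∈ Finset.Icc (-(n : ℤ)) (n : ℤ), ((1:ℝ) - 1)) = 0 by simp] at h0
        exact h0
      have h1 := (tendsto_const_nhds (x := BfunA A n)).add hsumlim
      rw [add_zero] at h1
      exact h1
    calc upperDensityZ F A ≤ limsup w atTop := by
          refine limsup_le_limsup (Eventually.of_forall hle) ?_ ?_
          · exact isCoboundedUnder_le_of_le atTop hu0
          · exact hwlim.isBoundedUnder_le
      _ = BfunA A n := hwlim.limsup_eq
  have h1 : upperDensityZ F A ≤ liminf (BfunA A) atTop := by
    refine le_liminf_of_le ?_ ?_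
    · exact isCoboundedUnder_ge_of_le atTop (fun n => BfunA_le_one A n)
    · filter_upwards [eventually_ge_atTop 1] with n hn
      exact hmain n hn
  refine le_trans h1 (liminf_le_limsup ?_ ?_)
  · exact isBoundedUnder_of ⟨1, fun n => BfunA_le_one A n⟩
  · exact isBoundedUnder_of ⟨0, fun n => BfunA_nonneg A n⟩

noncomputable def moptA (A : Set ℤ) (n : ℕ) : ℤ :=
  if h : 1 ≤ n then (exists_opt A n h).choose else 0

lemma density_opt (A : Set ℤ) :
    upperDensityZ (fun n => Finset.Icc (moptA A n + 1) (moptA A n + ((max n 1 : ℕ) : ℤ))) A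
      = limsup (BfunA A) atTop := by
  refine limsup_congr ?_
  filter_upwards [eventually_ge_atTop 1] with n hn
  have hmax : max n 1 = n := max_eq_left hn
  have hm : moptA A n = (exists_opt A n hn).choose := dif_pos hn
  obtain ⟨h1, h2⟩ := (exists_opt A n hn).choose_spec
  simp only [hmax]
  rw [card_intIcc (moptA A n) n]
  show (cntA A n (moptA A n) : ℝ) / (n : ℝ) = BfunA A n
  rw [hm]
  exact h2.symm

/-- Remark 3.3: for subsets of `ℤ`, the upper Banach density computed via Følner
sequences coincides with the interval-based upper Banach density
`limsup_n sup_m |A ∩ [m+1, m+n]| / n`. -/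
theorem banach_density_eq (A : Set ℤ) :
    sSup {x : ℝ | ∃ F : ℕ → Finset ℤ, IsFolnerZ F ∧ x = upperDensityZ F A} =
      limsup (fun n : ℕ =>
        ⨆ m : ℤ, (((Finset.Icc (m + 1) (m + (n : ℤ))).filter (· ∈ A)).card : ℝ) / (n : ℝ))
        atTop := by
  have hBdef : (fun n : ℕ =>
      ⨆ m : ℤ, (((Finset.Icc (m + 1) (m + (n : ℤ))).filter (· ∈ A)).card : ℝ) / (n : ℝ))
      = BfunA A := rfl
  rw [hBdef]
  set S := {x : ℝ | ∃ F : ℕ → Finset ℤ, IsFolnerZ F ∧ x = upperDensityZ F A} with hSdef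
  have hub : ∀ x ∈ S, x ≤ limsup (BfunA A) atTop := by
    rintro x ⟨F, hF, rfl⟩
    exact upper_le A F hF
  have hmem : limsup (BfunA A) atTop ∈ S :=
    ⟨_, folner_intervals (moptA A), (density_opt A).symm⟩
  exact le_antisymm (csSup_le ⟨_, hmem⟩ hub) (le_csSup ⟨_, fun x hx => hub x hx⟩ hmem)
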